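/- Let A be a complex-linear operator on a finite-dimensional complex vector space V that is symmetric with respect to a non-degenerate symmetric complex bilinear form g (i.e., g(Ax,y) = g(x,Ay) for all x,y). If V admits a basis of eigenvectors of A, then V admits a g-orthonormal basis of eigenvectors of A. -/

import Mathlib

open Module

private lemma aux_orthonormal {W : Type*} [AddCommGroup W] [Module ℂ W] [FiniteDimensional ℂ W]
    (B : LinearMap.BilinForm ℂ W) (hs : B.IsSymm) (hnd : B.Nondegenerate) :
    ∃ v : Basis (Fin (finrank ℂ W)) ℂ W,
      ∀ i j, B (v i) (v j) = if i = j then 1 else 0 := by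
  obtain ⟨v, hv⟩ := LinearMap.BilinForm.exists_orthogonal_basis (LinearMap.BilinForm.isSymm_iff.mp hs)
  have hd : ∀ i, B (v i) (v i) ≠ 0 := by
    intro i h0
    have hz : B (v i) = 0 := by
      apply v.ext
      intro j
      rcases eq_or_ne i j with rfl | hij
      · simpa using h0
      · simpa using hv hij
    exact v.ne_zero i (hnd.1 _ fun y => by rw [hz]; rfl)
  have hsq : ∀ i, ∃ s : ℂ, s ^ 2 = B (v i) (v i) := fun i =>
    IsAlgClosed.exists_pow_nat_eq _ two_pos
  choose s hsv using hsq
  have hsne : ∀ i, s i ≠ 0 := by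
    intro i h0
    exact hd i (by rw [← hsv i, h0]; ring)
  refine ⟨v.unitsSMul fun i => Units.mk0 (s i)⁻¹ (inv_ne_zero (hsne i)), ?_⟩
  intro i j
  rw [Basis.unitsSMul_apply, Basis.unitsSMul_apply]
  simp only [Units.smul_mk0, map_smul, LinearMap.map_smul₂, smul_eq_mul, LinearMap.smul_apply]
  rcases eq_or_ne i j with rfl | hij
  · rw [if_pos rfl, ← hsv i]
    field_simp
    rw [div_self (hsne i)]
  · rw [if_neg hij, hv hij]
    ring

/-- If a g-symmetric operator on a holomorphic inner product space admits a basis of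
eigenvectors, then it admits a g-orthonormal basis of eigenvectors. -/
theorem stmt_3 {V : Type*} [AddCommGroup V] [Module ℂ V] [FiniteDimensional ℂ V]
    (g : LinearMap.BilinForm ℂ V)
    (hsymm : ∀ x y : V, g x y = g y x)
    (hnd : ∀ x : V, (∀ y : V, g x y = 0) → x = 0)
    (A : V →ₗ[ℂ] V)
    (hA : ∀ x y : V, g (A x) y = g x (A y))
    (b : Basis (Fin (Module.finrank ℂ V)) ℂ V)
    (hb : ∀ i, ∃ μ : ℂ, A (b i) = μ • b i) :
    ∃ c : Basis (Fin (Module.finrank ℂ V)) ℂ V,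
      (∀ i j, g (c i) (c j) = if i = j then 1 else 0) ∧
      (∀ i, ∃ μ : ℂ, A (c i) = μ • c i) := by
  classical
  choose μ hμ using hb
  set E : ℂ → Submodule ℂ V := fun t => Module.End.eigenspace A t with hE
  have hbE : ∀ i, b i ∈ E (μ i) := fun i => Module.End.mem_eigenspace_iff.mpr (hμ i)
  -- eigenvectors for distinct eigenvalues are g-orthogonal
  have horth : ∀ {st t : ℂ}, st ≠ t → ∀ x ∈ E st, ∀ y ∈ E t, g x y = 0 := by
    intro st t hst x hx y hy
    have hx' : A x = st • x := Module.End.mem_eigenspace_iff.mp hx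
    have hy' : A y = t • y := Module.End.mem_eigenspace_iff.mp hy
    have h1 : st * g x y = t * g x y := by
      have h := hA x y
      rw [hx', hy'] at h
      simpa [smul_eq_mul] using h
    have h2 : (st - t) * g x y = 0 := by rw [sub_mul, h1, sub_self]
    exact (mul_eq_zero.mp h2).resolve_left (sub_ne_zero.mpr hst)
  set S : Finset ℂ := Finset.image μ Finset.univ with hS
  have hInd : iSupIndep (fun st : S => E st) :=
    (Module.End.eigenspaces_iSupIndep A).comp Subtype.coe_injective
  have hTop : ⨆ st : S, E st = ⊤ := by
    rw [eq_top_iff, ← b.span_eq, Submodule.span_le]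
    rintro _ ⟨i, rfl⟩
    exact Submodule.mem_iSup_of_mem ⟨μ i, by simp [hS]⟩ (hbE i)
  have hInt : DirectSum.IsInternal (fun st : S => E st) :=
    DirectSum.isInternal_submodule_of_iSupIndep_of_iSup_eq_top hInd hTop
  -- the restriction of g to each eigenspace is symmetric and nondegenerate
  have hsE : ∀ t : ℂ, (g.restrict (E t)).IsSymm := fun t => ⟨fun x y => by
    simpa using hsymm x y⟩
  have hndE : ∀ t : ℂ, (g.restrict (E t)).Nondegenerate := by
    intro t; refine LinearMap.BilinForm.Nondegenerate.ofSeparatingLeft ?_; intro x hx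
    have hgb : ∀ i, g (x : V) (b i) = 0 := by
      intro i
      rcases eq_or_ne t (μ i) with h | h
      · exact hx ⟨b i, h ▸ hbE i⟩
      · exact horth h _ x.2 _ (hbE i)
    have h0 : g (x : V) = 0 := b.ext fun i => by simpa using hgb i
    have : (x : V) = 0 := hnd _ fun y => by rw [h0]; rfl
    exact Subtype.ext this
  choose cbs hcbs using fun st : S => aux_orthonormal (g.restrict (E st)) (hsE st) (hndE st)
  let cb : Basis (Σ st : S, Fin (finrank ℂ (E st))) ℂ V := hInt.collectedBasis cbs
  have hcb : ∀ p : Σ st : S, Fin (finrank ℂ (E st)), cb p = (cbs p.1 p.2 : V) := by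
    intro p
    rw [hInt.collectedBasis_coe]
  have hcbmem : ∀ p : Σ st : S, Fin (finrank ℂ (E st)), cb p ∈ E p.1 := by
    intro p; rw [hcb]; exact (cbs p.1 p.2).2
  let e := cb.indexEquiv b
  refine ⟨cb.reindex e, ?_, ?_⟩
  · intro i j
    rw [Basis.reindex_apply, Basis.reindex_apply]
    have hsame : ∀ p q : (st : S) × Fin (finrank ℂ (E st)), p.1 = q.1 → p ≠ q →
        g (cb p) (cb q) = 0 := by
      rintro ⟨s1, p2⟩ ⟨s2, q2⟩ h1 hne
      cases h1
      have h2 : p2 ≠ q2 := fun h => hne (by rw [h])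
      have hv := hcbs s1 p2 q2
      simp only [LinearMap.BilinForm.restrict_apply, LinearMap.domRestrict_apply,
        if_neg h2] at hv
      rw [hcb ⟨s1, p2⟩, hcb ⟨s1, q2⟩]
      exact hv
    by_cases hij : i = j
    · subst hij
      rw [if_pos rfl]
      have hv := hcbs (e.symm i).1 (e.symm i).2 (e.symm i).2
      rw [hcb]
      simpa using hv
    · rw [if_neg hij]
      have hpq : e.symm i ≠ e.symm j := fun h => hij (e.symm.injective h)
      rcases eq_or_ne (e.symm i).1 (e.symm j).1 with h1 | h1
      · exact hsame _ _ h1 hpq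
      · exact horth (fun h => h1 (Subtype.ext h)) _ (hcbmem _) _ (hcbmem _)
  · intro i
    rw [Basis.reindex_apply]
    exact ⟨(e.symm i).1, Module.End.mem_eigenspace_iff.mp (hcbmem (e.symm i))⟩
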